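/- Let k₁,…,k_N, z ∈ ℝ^d be unit vectors, τ > 0, and pᵢ = exp(kᵢᵀz/τ)/Σⱼ exp(kⱼᵀz/τ). Then Σᵢ pᵢ ‖kᵢ − z‖ ≤ minᵢ ‖kᵢ − z‖ + √(2τ log N). -/

import Mathlib

open Finset
open scoped RealInnerProductSpace

theorem hopdc_softmax_distance_bound {d N : ℕ} (hN : 0 < N)
    (k : Fin N → EuclideanSpace ℝ (Fin d)) (z : EuclideanSpace ℝ (Fin d))
    (hk : ∀ i, ‖k i‖ = 1) (hz : ‖z‖ = 1)
    (τ : ℝ) (hτ : 0 < τ)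
    (p : Fin N → ℝ)
    (hp : ∀ i, p i = Real.exp (⟪k i, z⟫ / τ) / ∑ j, Real.exp (⟪k j, z⟫ / τ)) :
    ∑ i, p i * ‖k i - z‖ ≤
      (Finset.univ.inf' (Finset.univ_nonempty_iff.mpr ⟨⟨0, hN⟩⟩)
        (fun i => ‖k i - z‖)) + Real.sqrt (2 * τ * Real.log N) := by
  have hne : (Finset.univ : Finset (Fin N)).Nonempty := Finset.univ_nonempty_iff.mpr ⟨⟨0, hN⟩⟩
  set s : Fin N → ℝ := fun i => ⟪k i, z⟫ / τ with hs
  set Z : ℝ := ∑ j, Real.exp (s j) with hZdef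
  have hZpos : 0 < Z := Finset.sum_pos (fun j _ => Real.exp_pos _) hne
  have hppos : ∀ i, 0 < p i := fun i => by
    rw [hp i]; exact div_pos (Real.exp_pos _) hZpos
  have hpsum : ∑ i, p i = 1 := by
    simp only [hp]
    rw [← Finset.sum_div, div_self hZpos.ne']
  -- entropy bound : ∑ p i * (log Z - s i) ≤ log N
  have hlogp : ∀ i, Real.log Z - s i = Real.log (1 / p i) := by
    intro i
    have h : (1 : ℝ) / p i = Z / Real.exp (s i) := by
      rw [hp i, one_div_div]
    rw [h, Real.log_div hZpos.ne' (Real.exp_pos _).ne', Real.log_exp]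
  have hentropy : ∑ i, p i * (Real.log Z - s i) ≤ Real.log N := by
    have hgm := Real.geom_mean_le_arith_mean_weighted Finset.univ p (fun i => 1 / p i)
      (fun i _ => (hppos i).le) hpsum (fun i _ => (one_div_pos.mpr (hppos i)).le)
    have hRHS : ∑ i, p i * (1 / p i) = (N : ℝ) := by
      have : ∀ i ∈ (Finset.univ : Finset (Fin N)), p i * (1 / p i) = 1 := fun i _ => by
        field_simp [(hppos i).ne']
      rw [Finset.sum_congr rfl this]; simp
    have hprodpos : 0 < ∏ i, (1 / p i) ^ (p i) := by
      apply Finset.prod_pos; intro i _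
      exact Real.rpow_pos_of_pos (one_div_pos.mpr (hppos i)) _
    have := Real.log_le_log hprodpos (hgm.trans_eq hRHS)
    rw [Real.log_prod (fun i _ =>
      (Real.rpow_pos_of_pos (one_div_pos.mpr (hppos i)) _).ne')] at this
    calc ∑ i, p i * (Real.log Z - s i) = ∑ i, Real.log ((1 / p i) ^ (p i)) := by
          refine Finset.sum_congr rfl fun i _ => ?_
          rw [Real.log_rpow (one_div_pos.mpr (hppos i)), hlogp i, mul_comm]
      _ ≤ Real.log N := this
  -- log Z ≥ s i for all i
  have hlogZ : ∀ i, s i ≤ Real.log Z := fun i => by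
    rw [← Real.log_exp (s i)]
    exact Real.log_le_log (Real.exp_pos _) (Finset.single_le_sum
      (fun j (_ : j ∈ Finset.univ) => (Real.exp_pos (s j)).le) (Finset.mem_univ i))
  set m : ℝ := Finset.univ.inf' hne (fun i => ‖k i - z‖) with hm
  obtain ⟨i₀, -, hi₀⟩ := Finset.exists_mem_eq_inf' hne (fun i => ‖k i - z‖)
  have hmnonneg : 0 ≤ m := by rw [hm, hi₀]; exact norm_nonneg _
  have hdsq : ∀ i, ‖k i - z‖ ^ 2 = 2 - 2 * ⟪k i, z⟫ := fun i => by
    rw [norm_sub_sq_real, hk i, hz]; ring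
  -- second moment bound
  have hsecond : ∑ i, p i * ‖k i - z‖ ^ 2 ≤ m ^ 2 + 2 * τ * Real.log N := by
    have h1 : ∑ i, p i * ‖k i - z‖ ^ 2 = 2 - 2 * τ * ∑ i, p i * s i := by
      have hterm : ∀ i ∈ (Finset.univ : Finset (Fin N)),
          p i * ‖k i - z‖ ^ 2 = 2 * p i - 2 * τ * (p i * s i) := fun i _ => by
        rw [hdsq i]; simp only [hs]; field_simp
      rw [Finset.sum_congr rfl hterm, Finset.sum_sub_distrib, ← Finset.mul_sum,
        ← Finset.mul_sum, hpsum]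
      ring
    have h2 : s i₀ - Real.log N ≤ ∑ i, p i * s i := by
      have : ∑ i, p i * (Real.log Z - s i) = Real.log Z - ∑ i, p i * s i := by
        simp only [mul_sub]
        rw [Finset.sum_sub_distrib, ← Finset.sum_mul, hpsum, one_mul]
      rw [this] at hentropy
      have := hlogZ i₀
      linarith
    have h3 : m ^ 2 = 2 - 2 * τ * s i₀ := by
      rw [hm, hi₀, hdsq]
      simp only [hs]; field_simp
    rw [h1, h3]
    nlinarith
  -- Cauchy–Schwarz: (∑ p d)² ≤ ∑ p d²
  have hcs : (∑ i, p i * ‖k i - z‖) ^ 2 ≤ ∑ i, p i * ‖k i - z‖ ^ 2 := by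
    have := Finset.sum_mul_sq_le_sq_mul_sq Finset.univ (fun i => Real.sqrt (p i))
      (fun i => Real.sqrt (p i) * ‖k i - z‖)
    have he1 : ∀ i, Real.sqrt (p i) * (Real.sqrt (p i) * ‖k i - z‖) = p i * ‖k i - z‖ :=
      fun i => by rw [← mul_assoc, Real.mul_self_sqrt (hppos i).le]
    have he2 : ∀ i, Real.sqrt (p i) ^ 2 = p i := fun i => Real.sq_sqrt (hppos i).le
    have he3 : ∀ i, (Real.sqrt (p i) * ‖k i - z‖) ^ 2 = p i * ‖k i - z‖ ^ 2 := fun i => by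
      rw [mul_pow, he2]
    simp only [he1, he2, he3] at this
    rwa [hpsum, one_mul] at this
  have hτlog : 0 ≤ 2 * τ * Real.log N := by
    have : (1 : ℝ) ≤ (N : ℝ) := by exact_mod_cast hN
    have := Real.log_nonneg this
    positivity
  have hsum_nonneg : 0 ≤ ∑ i, p i * ‖k i - z‖ :=
    Finset.sum_nonneg fun i _ => mul_nonneg (hppos i).le (norm_nonneg _)
  have hfinal : ∑ i, p i * ‖k i - z‖ ≤ Real.sqrt (m ^ 2 + 2 * τ * Real.log N) := by
    have h := Real.sqrt_le_sqrt (hcs.trans hsecond)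
    rwa [Real.sqrt_sq hsum_nonneg] at h
  refine hfinal.trans ?_
  rw [show m + Real.sqrt (2 * τ * Real.log N) =
    Real.sqrt ((m + Real.sqrt (2 * τ * Real.log N)) ^ 2) from
      (Real.sqrt_sq (by positivity)).symm]
  apply Real.sqrt_le_sqrt
  nlinarith [Real.sq_sqrt hτlog, Real.sqrt_nonneg (2 * τ * Real.log N)]
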